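/- Let N = Q_1 ∩ Q_2 ∩ … ∩ Q_k be a minimal primary decomposition of N, where Q_i is p_i-primary for all i = 1, …, k, and let S = {1, …, k}. Then ⟨E_M(N)⟩ = N + (⋂_{i=1}^k p_i)·M + Σ_{∅ ≠ T ⊊ S} (⋂_{i∈T} p_i)·(⋂_{i∈S∖T} Q_i). -/

import Mathlib

/-- If `N = Q₁ ∩ ⋯ ∩ Q_k` is a minimal primary decomposition with `Qᵢ`
`pᵢ`-primary, then
`⟨E_M(N)⟩ = N + (⋂ᵢ pᵢ)M + Σ_{∅ ≠ T ⊊ S} (⋂_{i∈T} pᵢ)(⋂_{i∈S∖T} Qᵢ)`. -/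
theorem envelope_eq_of_primary_decomposition
    {R M : Type*} [CommRing R] [IsNoetherianRing R]
    [AddCommGroup M] [Module R M] [Module.Finite R M]
    (N : Submodule R M) (hN : N ≠ ⊤)
    (k : ℕ) (Q : Fin k → Submodule R M) (p : Fin k → Ideal R)
    -- each `Q i` is a primary submodule
    (hprimary : ∀ i, Q i ≠ ⊤ ∧ ∀ (r : R) (m : M), r • m ∈ Q i →
        m ∈ Q i ∨ ∃ n : ℕ, 0 < n ∧ ∀ x : M, r ^ n • x ∈ Q i)
    -- each `Q i` is `p i`-primary, i.e. `p i = √(Q i : M)`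
    (hrad : ∀ i, ((Q i).colon ⊤).radical = p i)
    (hprime : ∀ i, (p i).IsPrime)
    -- the decomposition
    (hdecomp : N = ⨅ i, Q i)
    -- minimality: the primes are pairwise distinct and no component is redundant
    (hdistinct : Function.Injective p)
    (hirr : ∀ j, ¬ (⨅ i, ⨅ _ : i ≠ j, Q i) ≤ Q j) :
    Submodule.span R {x : M | ∃ (r : R) (m : M) (n : ℕ),
        0 < n ∧ r ^ n • m ∈ N ∧ x = r • m}
      = N ⊔ (⨅ i, p i) • (⊤ : Submodule R M)
        ⊔ ⨆ T ∈ {T : Finset (Fin k) | T.Nonempty ∧ T ≠ Finset.univ},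
            (⨅ i ∈ T, p i) • (⨅ i ∈ Tᶜ, Q i) := by
  classical
  -- key: if r ∈ p i for all i in a finset T, some single power of r maps M into all those Q i
  have key : ∀ (r : R) (T : Finset (Fin k)), (∀ i ∈ T, r ∈ p i) →
      ∃ n : ℕ, 0 < n ∧ ∀ i ∈ T, ∀ x : M, r ^ n • x ∈ Q i := by
    intro r T hT
    have h1 : ∀ i ∈ T, ∃ n : ℕ, r ^ n ∈ (Q i).colon ⊤ := by
      intro i hi
      have : r ∈ ((Q i).colon ⊤).radical := by rw [hrad i]; exact hT i hi
      exact Ideal.mem_radical_iff.mp this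
    choose f hf using h1
    set g : Fin k → ℕ := fun i => if h : i ∈ T then f i h else 0 with hg
    refine ⟨1 + ∑ i, g i, Nat.lt_of_lt_of_le Nat.one_pos (Nat.le_add_right _ _), ?_⟩
    intro i hi x
    have hgi : g i = f i hi := by simp [hg, hi]
    have hle : g i ≤ 1 + ∑ j, g j := le_trans (Finset.single_le_sum (fun j _ => Nat.zero_le (g j)) (Finset.mem_univ i)) (Nat.le_add_left _ _)
    have : r ^ (1 + ∑ j, g j) ∈ (Q i).colon ⊤ := by
      have : r ^ (1 + ∑ j, g j) = r ^ (1 + ∑ j, g j - g i) * r ^ (g i) := by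
        rw [← pow_add, Nat.sub_add_cancel hle]
      rw [this, hgi]
      exact Ideal.mul_mem_left _ _ (hf i hi)
    exact Submodule.mem_colon.mp this x (by simp)
  apply le_antisymm
  · rw [Submodule.span_le]
    rintro x ⟨r, m, n, hn, hmem, rfl⟩
    set T : Finset (Fin k) := Finset.univ.filter (fun i => r ∈ p i) with hTdef
    have hmQ : ∀ i, i ∉ T → m ∈ Q i := by
      intro i hiT
      have hrp : r ∉ p i := by
        intro h; exact hiT (Finset.mem_filter.mpr ⟨Finset.mem_univ i, h⟩)
      have hQ : r ^ n • m ∈ Q i := by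
        have := hdecomp ▸ hmem
        exact Submodule.mem_iInf Q |>.mp this i
      rcases (hprimary i).2 (r ^ n) m hQ with h | ⟨n', hn', hx⟩
      · exact h
      · exfalso
        apply hrp
        rw [← hrad i]
        refine Ideal.mem_radical_iff.mpr ⟨n * n', ?_⟩
        refine Submodule.mem_colon.mpr fun x _ => ?_
        rw [pow_mul]
        exact hx x
    by_cases hTe : T = ∅
    · -- r • m ∈ N
      have hmN : m ∈ N := by
        rw [hdecomp]
        exact Submodule.mem_iInf Q |>.mpr fun i => hmQ i (by simp [hTe])
      exact Submodule.mem_sup_left (Submodule.mem_sup_left (Submodule.smul_mem _ r hmN))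
    · by_cases hTu : T = Finset.univ
      · have hrI : r ∈ ⨅ i, p i := by
          refine Submodule.mem_iInf p |>.mpr fun i => ?_
          have : i ∈ T := hTu ▸ Finset.mem_univ i
          exact (Finset.mem_filter.mp this).2
        exact Submodule.mem_sup_left (Submodule.mem_sup_right
          (Submodule.smul_mem_smul hrI Submodule.mem_top))
      · have hrI : r ∈ ⨅ i ∈ T, p i := by
          simp only [Submodule.mem_iInf]
          intro i hi
          exact (Finset.mem_filter.mp hi).2
        have hmI : m ∈ ⨅ i ∈ Tᶜ, Q i := by
          simp only [Submodule.mem_iInf]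
          intro i hi
          exact hmQ i (Finset.mem_compl.mp hi)
        refine Submodule.mem_sup_right ?_
        have hTmem : T ∈ {T : Finset (Fin k) | T.Nonempty ∧ T ≠ Finset.univ} :=
          ⟨Finset.nonempty_iff_ne_empty.mpr hTe, hTu⟩
        exact le_iSup₂ (f := fun (T : Finset (Fin k)) (_ : T ∈ {T : Finset (Fin k) | T.Nonempty ∧ T ≠ Finset.univ}) => (⨅ i ∈ T, p i) • (⨅ i ∈ Tᶜ, Q i)) T hTmem
          (Submodule.smul_mem_smul hrI hmI)
  · refine sup_le (sup_le ?_ ?_) ?_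
    · -- N ≤ span
      intro x hx
      exact Submodule.subset_span ⟨1, x, 1, one_pos, by simpa using hx, by simp⟩
    · -- (⨅ p i) • ⊤ ≤ span
      rw [Submodule.smul_le]
      intro r hr m _
      obtain ⟨n, hn, hQ⟩ := key r Finset.univ (fun i _ => Submodule.mem_iInf p |>.mp hr i)
      refine Submodule.subset_span ⟨r, m, n, hn, ?_, rfl⟩
      rw [hdecomp]
      exact Submodule.mem_iInf Q |>.mpr fun i => hQ i (Finset.mem_univ i) m
    · refine iSup₂_le fun T hT => ?_
      rw [Submodule.smul_le]
      intro r hr m hm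
      have hrT : ∀ i ∈ T, r ∈ p i := by
        simp only [Submodule.mem_iInf] at hr
        exact hr
      obtain ⟨n, hn, hQ⟩ := key r T hrT
      refine Submodule.subset_span ⟨r, m, n, hn, ?_, rfl⟩
      rw [hdecomp]
      refine Submodule.mem_iInf Q |>.mpr fun i => ?_
      by_cases hi : i ∈ T
      · exact hQ i hi m
      · have : m ∈ Q i := by
          simp only [Submodule.mem_iInf] at hm
          exact hm i (Finset.mem_compl.mpr hi)
        exact Submodule.smul_mem _ _ this
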